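/- arXiv:1211.3201 — 8 statements merged into one kernel-verified Lean document; each statement's English description precedes it below -/
import Mathlib

section
/- Let G=(V,E) be a finite simple graph, x: V → ℝ_{>0}, and define α(G;x) = max over vertices u and independent sets S ⊆ N(u) of x(S)/x(u). Given node costs c: V → ℝ_{≥0}, let S = {u ∈ V : c(u) ≤ Σ_{v ∈ N(u)} x(u)·c(v)/x(v)}. Then for every vertex cover S* of G, c(S) ≤ (α(G;x)+1)·c(S*). -/
open Finset

/-- Approximation guarantee of the x-scaled (neighbor-threshold) rule:
if `A` bounds `x(S)/x(u)` over independent subsets `S ⊆ N(u)` (i.e. `A = α(G;x)`),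
then the selected set has cost at most `(A+1)` times that of any vertex cover. -/
theorem stmt1 {V : Type*} [Fintype V] [DecidableEq V]
    (G : SimpleGraph V) [DecidableRel G.Adj]
    (x c : V → ℝ) (hx : ∀ v, 0 < x v) (hc : ∀ v, 0 ≤ c v)
    (A : ℝ)
    (hA : ∀ u : V, ∀ S : Finset V, S ⊆ G.neighborFinset u →
      (∀ a ∈ S, ∀ b ∈ S, ¬ G.Adj a b) → (∑ v ∈ S, x v) / x u ≤ A)
    (Sstar : Finset V) (hSstar : ∀ u v, G.Adj u v → u ∈ Sstar ∨ v ∈ Sstar) :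
    ∑ u ∈ univ.filter (fun u => c u ≤ ∑ w ∈ G.neighborFinset u, x u * c w / x w), c u
      ≤ (A + 1) * ∑ u ∈ Sstar, c u := by
  classical
  set T := univ.filter (fun u => c u ≤ ∑ w ∈ G.neighborFinset u, x u * c w / x w) with hTdef
  have h1 : ∑ u ∈ T ∩ Sstar, c u ≤ ∑ u ∈ Sstar, c u :=
    Finset.sum_le_sum_of_subset_of_nonneg Finset.inter_subset_right (fun i _ _ => hc i)
  have hindep : ∀ a ∈ T \ Sstar, ∀ b ∈ T \ Sstar, ¬ G.Adj a b := by
    intro a ha b hb hab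
    rcases hSstar a b hab with h | h
    · exact (Finset.mem_sdiff.mp ha).2 h
    · exact (Finset.mem_sdiff.mp hb).2 h
  have h2 : ∑ u ∈ T \ Sstar, c u ≤ A * ∑ w ∈ Sstar, c w := by
    have step1 : ∑ u ∈ T \ Sstar, c u ≤
        ∑ u ∈ T \ Sstar, ∑ w ∈ Sstar, (if G.Adj u w then x u * c w / x w else 0) := by
      apply Finset.sum_le_sum
      intro u hu
      have huT : u ∈ T := (Finset.mem_sdiff.mp hu).1
      have huS : u ∉ Sstar := (Finset.mem_sdiff.mp hu).2
      have hcu : c u ≤ ∑ w ∈ G.neighborFinset u, x u * c w / x w :=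
        (Finset.mem_filter.mp huT).2
      have hset : Sstar.filter (fun w => G.Adj u w) = G.neighborFinset u := by
        ext w
        simp only [Finset.mem_filter, SimpleGraph.mem_neighborFinset]
        constructor
        · exact fun h => h.2
        · intro hadj
          rcases hSstar u w hadj with h | h
          · exact absurd h huS
          · exact ⟨h, hadj⟩
      calc c u ≤ ∑ w ∈ G.neighborFinset u, x u * c w / x w := hcu
        _ = ∑ w ∈ Sstar, (if G.Adj u w then x u * c w / x w else 0) := by
            rw [← Finset.sum_filter, hset]
    have step2 : ∀ w ∈ Sstar,
        ∑ u ∈ T \ Sstar, (if G.Adj u w then x u * c w / x w else 0) ≤ A * c w := by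
      intro w hw
      set Su := (T \ Sstar).filter (fun u => G.Adj u w) with hSu
      have hsub : Su ⊆ G.neighborFinset w := by
        intro u hu
        rw [SimpleGraph.mem_neighborFinset]
        exact ((Finset.mem_filter.mp hu).2).symm
      have hind : ∀ a ∈ Su, ∀ b ∈ Su, ¬ G.Adj a b := fun a ha b hb =>
        hindep a (Finset.mem_filter.mp ha).1 b (Finset.mem_filter.mp hb).1
      have hsum : (∑ v ∈ Su, x v) ≤ A * x w := by
        have := hA w Su hsub hind
        rwa [div_le_iff₀ (hx w)] at this
      have heq : ∑ u ∈ T \ Sstar, (if G.Adj u w then x u * c w / x w else 0)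
          = (c w / x w) * ∑ v ∈ Su, x v := by
        rw [← Finset.sum_filter, ← hSu, Finset.mul_sum]
        apply Finset.sum_congr rfl
        intro v _
        field_simp
      rw [heq]
      calc (c w / x w) * ∑ v ∈ Su, x v ≤ (c w / x w) * (A * x w) := by
            apply mul_le_mul_of_nonneg_left hsum
            exact div_nonneg (hc w) (le_of_lt (hx w))
        _ = A * c w := by rw [mul_comm A (x w), ← mul_assoc, div_mul_cancel₀ _ (hx w).ne', mul_comm]
    calc ∑ u ∈ T \ Sstar, c u
        ≤ ∑ u ∈ T \ Sstar, ∑ w ∈ Sstar, (if G.Adj u w then x u * c w / x w else 0) := step1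
      _ = ∑ w ∈ Sstar, ∑ u ∈ T \ Sstar, (if G.Adj u w then x u * c w / x w else 0) :=
          Finset.sum_comm
      _ ≤ ∑ w ∈ Sstar, A * c w := Finset.sum_le_sum step2
      _ = A * ∑ w ∈ Sstar, c w := by rw [Finset.mul_sum]
  have hsplit : ∑ u ∈ T ∩ Sstar, c u + ∑ u ∈ T \ Sstar, c u = ∑ u ∈ T, c u :=
    Finset.sum_inter_add_sum_sdiff T Sstar c
  have : ∑ u ∈ T, c u ≤ (A + 1) * ∑ u ∈ Sstar, c u := by
    rw [← hsplit]; linarith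
  exact this
end

section
/- Let G=(V,E) be a finite simple graph with maximum degree Δ. Given node costs c: V → ℝ_{≥0}, the set S = {u : c(u) ≤ Σ_{v∈N(u)} c(v)} is a vertex cover of cost at most (Δ+1) times the minimum cost of a vertex cover. -/
open Finset

/-- The rule selecting `{u : c u ≤ ∑_{v ∈ N(u)} c v}` is a vertex cover of cost
at most `(Δ+1)` times the minimum vertex-cover cost. -/
theorem stmt2 {V : Type*} [Fintype V] [DecidableEq V]
    (G : SimpleGraph V) [DecidableRel G.Adj]
    (c : V → ℝ) (hc : ∀ v, 0 ≤ c v) :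
    (∀ u v, G.Adj u v →
      (c u ≤ ∑ w ∈ G.neighborFinset u, c w) ∨ (c v ≤ ∑ w ∈ G.neighborFinset v, c w)) ∧
    ∀ Sstar : Finset V, (∀ u v, G.Adj u v → u ∈ Sstar ∨ v ∈ Sstar) →
      ∑ u ∈ univ.filter (fun u => c u ≤ ∑ w ∈ G.neighborFinset u, c w), c u
        ≤ ((G.maxDegree : ℝ) + 1) * ∑ u ∈ Sstar, c u := by
  constructor
  · intro u v huv
    by_contra h
    push_neg at h
    obtain ⟨h1, h2⟩ := h
    have hv : c v ≤ ∑ w ∈ G.neighborFinset u, c w :=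
      Finset.single_le_sum (fun w _ => hc w) (by simpa using huv)
    have hu : c u ≤ ∑ w ∈ G.neighborFinset v, c w :=
      Finset.single_le_sum (fun w _ => hc w) (by simpa using huv.symm)
    linarith
  · intro S hS
    set T := (univ.filter (fun u => c u ≤ ∑ w ∈ G.neighborFinset u, c w)) with hT
    have key : ∀ u ∈ T \ S, c u ≤ ∑ w ∈ S, (if G.Adj u w then c w else 0) := by
      intro u hu
      rw [Finset.mem_sdiff, hT, Finset.mem_filter] at hu
      refine hu.1.2.trans (le_of_eq ?_)
      rw [show G.neighborFinset u = univ.filter (G.Adj u) from by ext w; simp,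
        Finset.sum_filter]
      refine (Finset.sum_subset (Finset.subset_univ S) ?_).symm
      intro w _ hw
      simp only [ite_eq_right_iff]
      intro hadj
      rcases hS u w hadj with h | h
      · exact absurd h hu.2
      · exact absurd h hw
    have h2 : ∑ u ∈ T \ S, c u ≤ (G.maxDegree : ℝ) * ∑ u ∈ S, c u := by
      calc ∑ u ∈ T \ S, c u ≤ ∑ u ∈ T \ S, ∑ w ∈ S, (if G.Adj u w then c w else 0) :=
            Finset.sum_le_sum key
        _ = ∑ w ∈ S, ∑ u ∈ T \ S, (if G.Adj u w then c w else 0) := Finset.sum_comm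
        _ ≤ ∑ w ∈ S, (G.maxDegree : ℝ) * c w := by
            refine Finset.sum_le_sum fun w _ => ?_
            rw [← Finset.sum_filter, Finset.sum_const, nsmul_eq_mul]
            refine mul_le_mul_of_nonneg_right ?_ (hc w)
            have hcard : ((T \ S).filter (fun u => G.Adj u w)).card ≤ G.maxDegree := by
              refine le_trans ?_ (G.degree_le_maxDegree w)
              rw [← SimpleGraph.card_neighborFinset_eq_degree]
              apply Finset.card_le_card
              intro u hu
              rw [Finset.mem_filter] at hu
              rw [SimpleGraph.mem_neighborFinset]
              exact hu.2.symm
            exact_mod_cast hcard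
        _ = (G.maxDegree : ℝ) * ∑ u ∈ S, c u := (Finset.mul_sum _ _ _).symm
    have h1 : ∑ u ∈ T ∩ S, c u ≤ ∑ u ∈ S, c u :=
      Finset.sum_le_sum_of_subset_of_nonneg Finset.inter_subset_right (fun i _ _ => hc i)
    have hsplit : ∑ u ∈ T, c u = ∑ u ∈ T ∩ S, c u + ∑ u ∈ T \ S, c u :=
      (Finset.sum_inter_add_sum_sdiff T S c).symm
    rw [hT] at hsplit
    rw [hsplit]
    nlinarith [Finset.sum_nonneg (fun u (_ : u ∈ S) => hc u)]
end

section
/- For every graph G=(V,E), vertex u ∈ V, and independent set S ⊆ N(u) maximizing x(S)/x(u) over all such pairs, the cost vector c with c(u) = x(u), c(v) = x(v) for v ∈ S, and c(w) = 0 otherwise makes the x-scaled rule output a set containing {u} ∪ S of cost x(u) + x(S), while V \ S is a vertex cover of cost x(u). Hence the approximation ratio of the x-scaled rule on G is at least 1 + α(G;x). -/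
open Finset

/-- Tightness of the approximation ratio of the x-scaled rule: for `u` and an independent
`S ⊆ N(u)` maximizing `x(S)/x(u)`, the cost vector `c(u)=x(u)`, `c(v)=x(v)` on `S`, `0`
elsewhere makes the edge-threshold x-scaled rule select all of `{u} ∪ S`, of cost
`x(u)+x(S)`, while `V∖S` is a vertex cover of cost `x(u)`. -/
theorem stmt3 {V : Type*} [Fintype V] [DecidableEq V]
    (G : SimpleGraph V) [DecidableRel G.Adj]
    (x : V → ℝ) (hx : ∀ v, 0 < x v)
    (u : V) (S : Finset V) (hS : S ⊆ G.neighborFinset u) (hSne : S.Nonempty)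
    (hindep : ∀ a ∈ S, ∀ b ∈ S, ¬ G.Adj a b)
    (hmax : ∀ u' : V, ∀ S' : Finset V, S' ⊆ G.neighborFinset u' →
      (∀ a ∈ S', ∀ b ∈ S', ¬ G.Adj a b) →
      (∑ v ∈ S', x v) / x u' ≤ (∑ v ∈ S, x v) / x u)
    (c : V → ℝ)
    (hc : ∀ w, c w = if w = u then x u else if w ∈ S then x w else 0) :
    (∀ w ∈ insert u S, ∃ v ∈ G.neighborFinset w, c w ≤ x w * c v / x v) ∧
    (∑ w ∈ insert u S, c w = x u + ∑ v ∈ S, x v) ∧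
    (∀ a b, G.Adj a b → a ∈ Sᶜ ∨ b ∈ Sᶜ) ∧
    (∑ w ∈ Sᶜ, c w = x u) := by
  have huS : u ∉ S := fun h => G.loopless.irrefl u (by simpa using hS h)
  refine ⟨?_, ?_, ?_, ?_⟩
  · intro w hw
    rcases Finset.mem_insert.mp hw with rfl | hwS
    · obtain ⟨v, hv⟩ := hSne
      refine ⟨v, hS hv, ?_⟩
      have hvne : v ≠ w := fun h => huS (h ▸ hv)
      rw [hc w, hc v, if_pos rfl, if_neg hvne, if_pos hv]
      rw [mul_div_assoc, div_self (hx v).ne']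
      simp
    · refine ⟨u, by simpa using (G.adj_symm (by simpa using hS hwS)), ?_⟩
      have hwne : w ≠ u := fun h => huS (h ▸ hwS)
      rw [hc w, hc u, if_neg hwne, if_pos hwS, if_pos rfl]
      rw [mul_div_assoc, div_self (hx u).ne']
      simp
  · rw [Finset.sum_insert huS, hc u, if_pos rfl]
    congr 1
    apply Finset.sum_congr rfl
    intro v hv
    rw [hc v, if_neg (show v ≠ u from fun h => huS (h ▸ hv)), if_pos hv]
  · intro a b hab
    by_contra h
    push_neg at h
    simp only [Finset.mem_compl, not_not] at h
    exact hindep a h.1 b h.2 hab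
  · rw [Finset.sum_eq_single u]
    · rw [hc u, if_pos rfl]
    · intro v hvc hv
      rw [hc v, if_neg hv, if_neg (Finset.mem_compl.mp hvc)]
    · intro h
      exact absurd (Finset.mem_compl.mpr huS) h
end

section
/- For every n ≥ 2, let G^n be the bipartite graph with vertices u_1,…,u_n,v_1,…,v_n and edges (u_i, v_j) for all i ≠ j, where agent i owns {u_i, v_i}. Then any family of induced subgraphs of G^n, each containing at most one node from each pair {u_i, v_i}, whose edge sets together cover all edges of G^n, must have size at least 1 + log_2 n. -/
open Finset

lemma middle_choose_le (k : ℕ) (hk : 1 ≤ k) : k.choose (k / 2) ≤ 2 ^ (k - 1) := by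
  induction k with
  | zero => omega
  | succ k ih =>
    rcases Nat.eq_zero_or_pos k with h | h
    · subst h; simp
    · have h1 := ih h
      obtain ⟨m, hm⟩ : ∃ m, (k + 1) / 2 = m + 1 := ⟨(k + 1) / 2 - 1, by omega⟩
      rw [hm, Nat.choose_succ_succ]
      calc k.choose m + k.choose (m + 1)
          ≤ k.choose (k / 2) + k.choose (k / 2) :=
            add_le_add (Nat.choose_le_middle _ _) (Nat.choose_le_middle _ _)
        _ ≤ 2 ^ (k - 1) + 2 ^ (k - 1) := add_le_add h1 h1
        _ = 2 ^ (k - 1) * 2 := by ring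
        _ = 2 ^ (k - 1 + 1) := (pow_succ 2 (k - 1)).symm
        _ = 2 ^ (k + 1 - 1) := by congr 1; omega

/-- Any family of single-dimensional subgraphs (at most one node from each pair
`{u_i, v_i}`) of the graph `G^n` (bipartite, with edges `(u_i, v_j)` for `i ≠ j`) whose
edge sets cover all edges of `G^n` has size at least `1 + log₂ n`. -/
theorem stmt7 (n k : ℕ) (hn : 2 ≤ n)
    (W : Fin k → Set (Fin n ⊕ Fin n))
    (hsingle : ∀ q i, ¬ (Sum.inl i ∈ W q ∧ Sum.inr i ∈ W q))
    (hcover : ∀ i j : Fin n, i ≠ j → ∃ q, Sum.inl i ∈ W q ∧ Sum.inr j ∈ W q) :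
    1 + Real.logb 2 n ≤ (k : ℝ) := by
  classical
  -- k ≥ 1
  have h01 : (⟨0, by omega⟩ : Fin n) ≠ ⟨1, by omega⟩ := by
    intro h; simpa using congrArg Fin.val h
  obtain ⟨q0, -⟩ := hcover _ _ h01
  have hk1 : 1 ≤ k := q0.pos
  -- the antichain
  set F : Fin n → Finset (Fin k) :=
    fun i => Finset.univ.filter (fun q => Sum.inl i ∈ W q) with hF
  have hnot : ∀ i j : Fin n, i ≠ j → ¬ F i ⊆ F j := by
    intro i j hij hsub
    obtain ⟨q, hqi, hqj⟩ := hcover i j hij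
    have hqFi : q ∈ F i := by simp [hF, hqi]
    have : Sum.inl j ∈ W q := by
      have := hsub hqFi
      simpa [hF] using this
    exact hsingle q j ⟨this, hqj⟩
  have hinj : Function.Injective F := by
    intro i j h
    by_contra hij
    exact hnot i j hij (le_of_eq h)
  set 𝒜 : Finset (Finset (Fin k)) := Finset.univ.image F with h𝒜
  have hcard : 𝒜.card = n := by
    rw [h𝒜, Finset.card_image_of_injective _ hinj, Finset.card_univ, Fintype.card_fin]
  have hanti : IsAntichain (· ⊆ ·) (𝒜 : Set (Finset (Fin k))) := by
    intro a ha b hb hab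
    simp only [h𝒜, Finset.coe_image, Finset.coe_univ, Set.image_univ,
      Set.mem_range] at ha hb
    obtain ⟨i, rfl⟩ := ha
    obtain ⟨j, rfl⟩ := hb
    have hij : i ≠ j := fun h => hab (by rw [h])
    exact hnot i j hij
  have hsp : 𝒜.card ≤ k.choose (k / 2) := by
    simpa using IsAntichain.sperner hanti
  have hnle : n ≤ 2 ^ (k - 1) := by
    rw [← hcard]
    exact hsp.trans (middle_choose_le k hk1)
  -- conclude
  have hnpos : (0 : ℝ) < n := by positivity
  have hle : (n : ℝ) ≤ 2 ^ (k - 1) := by exact_mod_cast hnle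
  have hlog : Real.logb 2 (n : ℝ) ≤ (k - 1 : ℕ) := by
    calc Real.logb 2 (n : ℝ) ≤ Real.logb 2 ((2 : ℝ) ^ (k - 1)) :=
          Real.logb_le_logb_of_le (by norm_num) hnpos hle
      _ = (k - 1 : ℕ) := by
          rw [Real.logb_pow, Real.logb_self_eq_one (by norm_num)]; ring
  have : ((k - 1 : ℕ) : ℝ) = (k : ℝ) - 1 := by
    have : 1 ≤ k := hk1
    push_cast [Nat.cast_sub hk1]
    ring
  linarith [hlog, this ▸ hlog]
end

section
/- Let B = (X ∪ Y, F) be a bipartite graph in which every vertex of X has degree at most d. Given node costs c ≥ 0, consider the rule that for each u ∈ Y selects u if c(u) ≤ Σ_{v ∈ N(u)} c(v), and selects all of N(u) otherwise. The resulting set S is a vertex cover of B of cost at most 2d · OPT(B,c), where OPT(B,c) is the minimum vertex-cover cost of B. -/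
open Finset

private lemma sum_union_le' {V : Type*} [DecidableEq V] (s t : Finset V) (c : V → ℝ)
    (hc : ∀ v, 0 ≤ c v) : ∑ v ∈ s ∪ t, c v ≤ ∑ v ∈ s, c v + ∑ v ∈ t, c v := by
  rw [← Finset.union_sdiff_self_eq_union, Finset.sum_union Finset.disjoint_sdiff]
  exact add_le_add_right (Finset.sum_le_sum_of_subset_of_nonneg Finset.sdiff_subset
    (fun v _ _ => hc v)) _

private lemma sum_biUnion_le' {V : Type*} [DecidableEq V] (s : Finset V) (N : V → Finset V)
    (c : V → ℝ) (hc : ∀ v, 0 ≤ c v) :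
    ∑ v ∈ s.biUnion N, c v ≤ ∑ u ∈ s, ∑ z ∈ N u, c z := by
  classical
  induction s using Finset.induction_on with
  | empty => simp
  | insert _ _ ha ih =>
    rw [Finset.biUnion_insert, Finset.sum_insert ha]
    calc _ ≤ ∑ v ∈ N _, c v + ∑ v ∈ Finset.biUnion _ N, c v :=
          sum_union_le' _ _ c hc
      _ ≤ _ := by gcongr

/-- Star rule on a bipartite graph `B = (X ∪ Y, F)` where every vertex of `X` has degree
at most `d`: for each `u ∈ Y` select `u` if `c u ≤ ∑_{v ∈ N(u)} c v` and select `N(u)`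
otherwise. The result is a vertex cover of cost at most `2d` times the optimum. -/
theorem stmt10 {V : Type*} [Fintype V] [DecidableEq V]
    (B : SimpleGraph V) [DecidableRel B.Adj]
    (X Y : Finset V) (hdisj : Disjoint X Y)
    (hbip : ∀ u v, B.Adj u v → (u ∈ X ∧ v ∈ Y) ∨ (u ∈ Y ∧ v ∈ X))
    (d : ℕ) (hdeg : ∀ v ∈ X, B.degree v ≤ d)
    (c : V → ℝ) (hc : ∀ v, 0 ≤ c v) :
    (∀ u v, B.Adj u v →
      u ∈ (Y.filter (fun w => c w ≤ ∑ z ∈ B.neighborFinset w, c z)) ∪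
          (Y.filter (fun w => ¬ c w ≤ ∑ z ∈ B.neighborFinset w, c z)).biUnion
            (fun w => B.neighborFinset w) ∨
      v ∈ (Y.filter (fun w => c w ≤ ∑ z ∈ B.neighborFinset w, c z)) ∪
          (Y.filter (fun w => ¬ c w ≤ ∑ z ∈ B.neighborFinset w, c z)).biUnion
            (fun w => B.neighborFinset w)) ∧
    ∀ T : Finset V, (∀ u v, B.Adj u v → u ∈ T ∨ v ∈ T) →
      ∑ v ∈ (Y.filter (fun w => c w ≤ ∑ z ∈ B.neighborFinset w, c z)) ∪
          (Y.filter (fun w => ¬ c w ≤ ∑ z ∈ B.neighborFinset w, c z)).biUnion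
            (fun w => B.neighborFinset w), c v
        ≤ 2 * d * ∑ v ∈ T, c v := by
  classical
  have hNX : ∀ u ∈ Y, ∀ z ∈ B.neighborFinset u, z ∈ X := by
    intro u hu z hz
    rw [SimpleGraph.mem_neighborFinset] at hz
    rcases hbip u z hz with ⟨hux, _⟩ | ⟨_, hzx⟩
    · exact absurd hu (Finset.disjoint_left.mp hdisj hux)
    · exact hzx
  constructor
  · intro u v h
    rcases hbip u v h with ⟨hux, hvy⟩ | ⟨huy, hvx⟩
    · by_cases hp : c v ≤ ∑ z ∈ B.neighborFinset v, c z
      · right; exact mem_union_left _ (mem_filter.mpr ⟨hvy, hp⟩)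
      · left
        exact mem_union_right _ (mem_biUnion.mpr ⟨v, mem_filter.mpr ⟨hvy, hp⟩,
          (SimpleGraph.mem_neighborFinset _ _ _).mpr h.symm⟩)
    · by_cases hp : c u ≤ ∑ z ∈ B.neighborFinset u, c z
      · left; exact mem_union_left _ (mem_filter.mpr ⟨huy, hp⟩)
      · right
        exact mem_union_right _ (mem_biUnion.mpr ⟨u, mem_filter.mpr ⟨huy, hp⟩,
          (SimpleGraph.mem_neighborFinset _ _ _).mpr h⟩)
  · intro T hT
    have hTpos : (0:ℝ) ≤ ∑ v ∈ T, c v := Finset.sum_nonneg fun v _ => hc v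
    set P : V → Prop := fun w => c w ≤ ∑ z ∈ B.neighborFinset w, c z with hP
    rcases Nat.eq_zero_or_pos d with hd | hd
    · -- d = 0 : no edges at all, everything is zero
      subst hd
      have hNempty : ∀ u ∈ Y, B.neighborFinset u = ∅ := by
        intro u hu
        rw [Finset.eq_empty_iff_forall_notMem]
        intro z hz
        have hzX := hNX u hu z hz
        have hadj : B.Adj u z := (SimpleGraph.mem_neighborFinset _ _ _).mp hz
        have h1 : 0 < B.degree z := by
          rw [← SimpleGraph.card_neighborFinset_eq_degree]
        
          exact Finset.card_pos.mpr ⟨u, (SimpleGraph.mem_neighborFinset _ _ _).mpr hadj.symm⟩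
        have := hdeg z hzX
        omega
      have h1 : ∑ v ∈ (Y.filter (fun w => c w ≤ ∑ z ∈ B.neighborFinset w, c z)) ∪
          (Y.filter (fun w => ¬ c w ≤ ∑ z ∈ B.neighborFinset w, c z)).biUnion
            (fun w => B.neighborFinset w), c v = 0 := by
        apply Finset.sum_eq_zero
        intro v hv
        rcases Finset.mem_union.mp hv with hv | hv
        · obtain ⟨hvY, hvle⟩ := Finset.mem_filter.mp hv
          rw [hNempty v hvY] at hvle
          simp at hvle
          linarith [hc v, hvle]
        · obtain ⟨u, hu, hv⟩ := Finset.mem_biUnion.mp hv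
          rw [hNempty u (Finset.mem_of_mem_filter u hu)] at hv
          exact absurd hv (Finset.notMem_empty v)
      rw [h1]
      simp
    · -- main case d ≥ 1
      set N : V → Finset V := fun w => B.neighborFinset w with hNdef
      -- Step 1: sum over the selected set is at most the sum of per-star minima
      have step1 : ∑ v ∈ (Y.filter P) ∪ (Y.filter (fun w => ¬ P w)).biUnion N, c v ≤
          ∑ u ∈ Y.filter P, c u + ∑ u ∈ Y.filter (fun w => ¬ P w), ∑ z ∈ N u, c z := by
        calc _ ≤ ∑ u ∈ Y.filter P, c u + ∑ v ∈ (Y.filter (fun w => ¬ P w)).biUnion N, c v :=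
              sum_union_le' _ _ c hc
          _ ≤ _ := by gcongr; exact sum_biUnion_le' _ _ c hc
      -- the per-star minimum function
      set f : V → ℝ := fun u => if P u then c u else ∑ z ∈ N u, c z with hf
      have hsplit : ∑ u ∈ Y.filter P, c u + ∑ u ∈ Y.filter (fun w => ¬ P w),
          ∑ z ∈ N u, c z = ∑ u ∈ Y, f u := by
        rw [← Finset.sum_filter_add_sum_filter_not Y P f]
        congr 1
        · exact Finset.sum_congr rfl fun u hu => by
            simp [hf, (Finset.mem_filter.mp hu).2]
        · exact Finset.sum_congr rfl fun u hu => by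
            simp [hf, (Finset.mem_filter.mp hu).2]
      -- compare with the cover T, star by star
      set g : V → ℝ := fun u => if u ∈ T then c u else ∑ z ∈ T.filter (· ∈ N u), c z with hg
      have key : ∀ u ∈ Y, f u ≤ g u := by
        intro u hu
        by_cases huT : u ∈ T
        · simp only [hg, if_pos huT, hf]
          by_cases hp : P u
          · rw [if_pos hp]
          · rw [if_neg hp]
            exact le_of_lt (lt_of_not_ge hp)
        · have hNT : ∀ z ∈ N u, z ∈ T := by
            intro z hz
            have hadj : B.Adj u z := (SimpleGraph.mem_neighborFinset _ _ _).mp hz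
            rcases hT u z hadj with h | h
            · exact absurd h huT
            · exact h
          have heq : T.filter (· ∈ N u) = N u := by
            ext z
            simp only [Finset.mem_filter]
            exact ⟨fun h => h.2, fun h => ⟨hNT z h, h⟩⟩
          simp only [hg, if_neg huT, heq, hf]
          by_cases hp : P u
          · rw [if_pos hp]; exact hp
          · rw [if_neg hp]
      have step2 : ∑ u ∈ Y, f u ≤ ∑ u ∈ Y, g u := Finset.sum_le_sum key
      -- evaluate the g-sum
      have hgsplit : ∑ u ∈ Y, g u = ∑ u ∈ Y.filter (· ∈ T), c u +
          ∑ u ∈ Y.filter (· ∉ T), ∑ z ∈ T.filter (· ∈ N u), c z := by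
        rw [← Finset.sum_filter_add_sum_filter_not Y (· ∈ T) g]
        congr 1
        · exact Finset.sum_congr rfl fun u hu => by
            simp [hg, (Finset.mem_filter.mp hu).2]
        · exact Finset.sum_congr rfl fun u hu => by
            simp [hg, (Finset.mem_filter.mp hu).2]
      have hfirst : ∑ u ∈ Y.filter (· ∈ T), c u ≤ ∑ v ∈ T, c v := by
        apply Finset.sum_le_sum_of_subset_of_nonneg
        · intro u hu; exact (Finset.mem_filter.mp hu).2
        · intro v _ _; exact hc v
      have hsecond : ∑ u ∈ Y.filter (· ∉ T), ∑ z ∈ T.filter (· ∈ N u), c z ≤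
          (d:ℝ) * ∑ v ∈ T, c v := by
        have hswap : ∑ u ∈ Y.filter (· ∉ T), ∑ z ∈ T.filter (· ∈ N u), c z =
            ∑ z ∈ T, ((Y.filter (· ∉ T)).filter (fun u => z ∈ N u)).card * c z := by
          rw [Finset.sum_comm' (s := Y.filter (· ∉ T)) (t := fun u => T.filter (· ∈ N u))
            (t' := T) (s' := fun z => (Y.filter (· ∉ T)).filter (fun u => z ∈ N u))
            (f := fun _ z => c z)]
          · exact Finset.sum_congr rfl fun z _ => by
              rw [Finset.sum_const, nsmul_eq_mul]
          · intro u z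
            simp only [Finset.mem_filter]
            tauto
        rw [hswap, Finset.mul_sum]
        apply Finset.sum_le_sum
        intro z hz
        have hcard : ((Y.filter (· ∉ T)).filter (fun u => z ∈ N u)).card ≤ d := by
          rcases Finset.eq_empty_or_nonempty ((Y.filter (· ∉ T)).filter (fun u => z ∈ N u))
            with he | ⟨u, hu⟩
          · rw [he]; simp
          · obtain ⟨hu1, hu2⟩ := Finset.mem_filter.mp hu
            have huY : u ∈ Y := (Finset.mem_filter.mp hu1).1
            have hzX : z ∈ X := hNX u huY z hu2
            have hsub : (Y.filter (· ∉ T)).filter (fun u => z ∈ N u) ⊆ N z := by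
              intro w hw
              have hw2 := (Finset.mem_filter.mp hw).2
              have hadj : B.Adj w z := (SimpleGraph.mem_neighborFinset _ _ _).mp hw2
              exact (SimpleGraph.mem_neighborFinset _ _ _).mpr hadj.symm
            calc _ ≤ (N z).card := Finset.card_le_card hsub
              _ = B.degree z := (SimpleGraph.card_neighborFinset_eq_degree _ _)
              _ ≤ d := hdeg z hzX
        have := hc z
        calc (((Y.filter (· ∉ T)).filter (fun u => z ∈ N u)).card : ℝ) * c z ≤ (d:ℝ) * c z :=
              mul_le_mul_of_nonneg_right (by exact_mod_cast hcard) (hc z)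
          _ = _ := rfl
      have hd1 : (1:ℝ) + d ≤ 2 * d := by
        have : (1:ℝ) ≤ d := by exact_mod_cast hd
        linarith
      calc ∑ v ∈ (Y.filter P) ∪ (Y.filter (fun w => ¬ P w)).biUnion N, c v
          ≤ ∑ u ∈ Y, f u := by rw [← hsplit]; exact step1
        _ ≤ ∑ u ∈ Y, g u := step2
        _ ≤ ∑ v ∈ T, c v + (d:ℝ) * ∑ v ∈ T, c v := by
            rw [hgsplit]; exact add_le_add hfirst hsecond
        _ = (1 + (d:ℝ)) * ∑ v ∈ T, c v := by ring
        _ ≤ 2 * d * ∑ v ∈ T, c v := by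
            apply mul_le_mul_of_nonneg_right hd1 hTpos
end

section
/- Let B = (X ∪ Y, F) be a bipartite graph and for each u ∈ Y let S*_u be a minimum-cost vertex cover of the star centered at u with leaves N(u). If every vertex of X has degree at most d in B, then Σ_{u∈Y} c(S*_u) ≤ d · OPT(B, c), where OPT(B,c) is the minimum cost of a vertex cover of B under nonnegative node costs c. -/
open Finset

/-- In a bipartite graph `B = (X ∪ Y, F)` in which every vertex of `X` has degree at most
`d`, the sum over `u ∈ Y` of the minimum cost of a vertex cover of the star centered at
`u` is at most `d` times the minimum vertex-cover cost of `B`. -/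
theorem stmt11 {V : Type*} [Fintype V] [DecidableEq V]
    (B : SimpleGraph V) [DecidableRel B.Adj]
    (X Y : Finset V) (hdisj : Disjoint X Y)
    (hbip : ∀ u v, B.Adj u v → (u ∈ X ∧ v ∈ Y) ∨ (u ∈ Y ∧ v ∈ X))
    (d : ℕ) (hdeg : ∀ v ∈ X, B.degree v ≤ d)
    (c : V → ℝ) (hc : ∀ v, 0 ≤ c v) :
    ∀ T : Finset V, (∀ u v, B.Adj u v → u ∈ T ∨ v ∈ T) →
      ∑ u ∈ Y, min (c u) (∑ v ∈ B.neighborFinset u, c v) ≤ d * ∑ v ∈ T, c v := by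
  intro T hT
  -- if u ∈ Y is adjacent to v, then v ∈ X and v ∉ Y
  have hXv : ∀ u ∈ Y, ∀ v, B.Adj u v → v ∈ X := by
    intro u hu v hadj
    rcases hbip u v hadj with ⟨huX, _⟩ | ⟨_, hvX⟩
    · exact absurd hu (Finset.disjoint_left.mp hdisj huX)
    · exact hvX
  -- split the sum over Y into Y ∩ T and Y \ T
  have hsplit : ∑ u ∈ Y, min (c u) (∑ v ∈ B.neighborFinset u, c v)
      ≤ (∑ u ∈ Y ∩ T, min (c u) (∑ v ∈ B.neighborFinset u, c v))
        + ∑ u ∈ Y \ T, ∑ v ∈ B.neighborFinset u, c v := by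
    rw [← Finset.sum_inter_add_sum_sdiff Y T
      (fun u => min (c u) (∑ v ∈ B.neighborFinset u, c v))]
    gcongr with u hu
    exact min_le_right _ _
  -- Part A
  have hA : (∑ u ∈ Y ∩ T, min (c u) (∑ v ∈ B.neighborFinset u, c v))
      ≤ d * ∑ u ∈ T ∩ Y, c u := by
    rw [Finset.inter_comm T Y, Finset.mul_sum]
    apply Finset.sum_le_sum
    intro u hu
    rcases Finset.mem_inter.mp hu with ⟨huY, _⟩
    rcases Finset.eq_empty_or_nonempty (B.neighborFinset u) with he | ⟨v, hv⟩
    · rw [he]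
      simp only [Finset.sum_empty]
      have := hc u
      have : min (c u) 0 = 0 := min_eq_right (hc u)
      rw [this]
      positivity
    · have hadj : B.Adj u v := (B.mem_neighborFinset u v).mp hv
      have hvX : v ∈ X := hXv u huY v hadj
      have h1d : 1 ≤ d := by
        have h1 : 1 ≤ B.degree v := by
          rw [← SimpleGraph.card_neighborFinset_eq_degree]
          exact Finset.card_pos.mpr ⟨u, (B.mem_neighborFinset v u).mpr hadj.symm⟩
        exact le_trans h1 (hdeg v hvX)
      calc min (c u) (∑ v ∈ B.neighborFinset u, c v) ≤ c u := min_le_left _ _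
        _ = 1 * c u := (one_mul _).symm
        _ ≤ d * c u := by
            apply mul_le_mul_of_nonneg_right _ (hc u)
            exact_mod_cast h1d
  -- Part B
  have hB : (∑ u ∈ Y \ T, ∑ v ∈ B.neighborFinset u, c v)
      ≤ d * ∑ v ∈ T \ Y, c v := by
    have hrw : (∑ u ∈ Y \ T, ∑ v ∈ B.neighborFinset u, c v)
        = ∑ v : V, (((Y \ T).filter (fun u => B.Adj u v)).card : ℝ) * c v := by
      have : ∀ u, (∑ v ∈ B.neighborFinset u, c v)
          = ∑ v : V, if B.Adj u v then c v else 0 := by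
        intro u
        rw [SimpleGraph.neighborFinset_eq_filter, Finset.sum_filter]
      simp_rw [this]
      rw [Finset.sum_comm]
      congr 1
      ext v
      rw [← Finset.sum_filter, Finset.sum_const, nsmul_eq_mul]
    rw [hrw]
    have hrhs : d * ∑ v ∈ T \ Y, c v
        = ∑ v : V, (if v ∈ T \ Y then (d : ℝ) * c v else 0) := by
      rw [Finset.sum_ite_mem, Finset.univ_inter, Finset.mul_sum]
    rw [hrhs]
    apply Finset.sum_le_sum
    intro v _
    set s := (Y \ T).filter (fun u => B.Adj u v) with hs
    rcases Finset.eq_empty_or_nonempty s with he | ⟨u, hu⟩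
    · rw [he]
      simp only [Finset.card_empty, Nat.cast_zero, zero_mul]
      split
      · exact mul_nonneg (Nat.cast_nonneg d) (hc _)
      · exact le_refl 0
    · rcases Finset.mem_filter.mp hu with ⟨huYT, hadj⟩
      rcases Finset.mem_sdiff.mp huYT with ⟨huY, huT⟩
      have hvX : v ∈ X := hXv u huY v hadj
      have hvT : v ∈ T := (hT u v hadj).resolve_left huT
      have hvY : v ∉ Y := Finset.disjoint_left.mp hdisj hvX
      rw [if_pos (Finset.mem_sdiff.mpr ⟨hvT, hvY⟩)]
      apply mul_le_mul_of_nonneg_right _ (hc v)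
      have hcard : s.card ≤ B.degree v := by
        rw [← SimpleGraph.card_neighborFinset_eq_degree]
        apply Finset.card_le_card
        intro w hw
        rcases Finset.mem_filter.mp hw with ⟨_, hadj'⟩
        exact (B.mem_neighborFinset v w).mpr hadj'.symm
      exact_mod_cast le_trans hcard (hdeg v hvX)
  calc ∑ u ∈ Y, min (c u) (∑ v ∈ B.neighborFinset u, c v)
      ≤ (∑ u ∈ Y ∩ T, min (c u) (∑ v ∈ B.neighborFinset u, c v))
        + ∑ u ∈ Y \ T, ∑ v ∈ B.neighborFinset u, c v := hsplit
    _ ≤ d * ∑ u ∈ T ∩ Y, c u + d * ∑ v ∈ T \ Y, c v := add_le_add hA hB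
    _ = d * ∑ v ∈ T, c v := by
        rw [← mul_add, Finset.sum_inter_add_sum_sdiff]
end

section
/- If (y*, x*) is an optimal solution to the facility location LP and algorithm A is an LMP ρ-approximation (returning for any instance a solution (F, σ) with ρ·Σ_{ℓ∈F} f_ℓ + Σ_j c_{σ(j)j} ≤ ρ·OPT_LP), then the LP max{Σ_q λ_q : Σ_q λ_q y^(q)_ℓ = y*_ℓ ∀ℓ, Σ_q λ_q (Σ_{j,ℓ} c_{ℓj} x^(q)_{ℓj}) ≤ ρ Σ_{j,ℓ} c_{ℓj} x*_{ℓj}, Σ_q λ_q ≤ 1, λ ≥ 0} over all integral LP-feasible solutions (y^(q), x^(q)) has optimal value exactly 1. -/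
open Finset

/-- Feasibility for the facility-location LP relaxation (FL-P): every client is
fractionally covered, and `0 ≤ x ≤ y ≤ 1`. -/
def FLFeas {F D : Type*} [Fintype F] (y : F → ℝ) (x : F → D → ℝ) : Prop :=
  (∀ j : D, 1 ≤ ∑ ℓ, x ℓ j) ∧ ∀ (ℓ : F) (j : D), (0 ≤ x ℓ j ∧ x ℓ j ≤ y ℓ) ∧ y ℓ ≤ 1

/-- 0/1 vector associated to a Boolean facility-opening vector. -/
def boolY {F : Type*} (q : F → Bool) : F → ℝ := fun ℓ => if q ℓ then 1 else 0

/-- 0/1 matrix associated to a Boolean assignment. -/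
def boolX {F D : Type*} (q : F → D → Bool) : F → D → ℝ := fun ℓ j => if q ℓ j then 1 else 0

/-- Given an optimal fractional solution `(y*, x*)` of the facility-location LP and an LMP
`ρ`-approximation algorithm, the convex-decomposition LP
`max {∑ λ_q : ∑ λ_q y^{(q)} = y*, ∑ λ_q conn(x^{(q)}) ≤ ρ conn(x*), ∑ λ_q ≤ 1, λ ≥ 0}`
over integral feasible solutions has optimal value exactly 1. -/
theorem stmt17 {F D : Type*} [Fintype F] [Fintype D] [DecidableEq F] [DecidableEq D]
    (f : F → ℝ) (cm : F → D → ℝ)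
    (hf : ∀ ℓ, 0 ≤ f ℓ) (hcm : ∀ ℓ j, 0 ≤ cm ℓ j)
    (hmetric : ∀ ℓ ℓ' j j', cm ℓ j ≤ cm ℓ j' + cm ℓ' j' + cm ℓ' j)
    (ρ : ℝ) (hρ : 1 ≤ ρ)
    (hLMP : ∀ (f' : F → ℝ) (c' : F → D → ℝ), (∀ ℓ, 0 ≤ f' ℓ) → (∀ ℓ j, 0 ≤ c' ℓ j) →
      (∀ ℓ ℓ' j j', c' ℓ j ≤ c' ℓ j' + c' ℓ' j' + c' ℓ' j) →
      ∃ q : (F → Bool) × (F → D → Bool), FLFeas (boolY q.1) (boolX q.2) ∧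
        ∀ y x, FLFeas y x →
          ρ * (∑ ℓ, f' ℓ * boolY q.1 ℓ) + ∑ ℓ, ∑ j, c' ℓ j * boolX q.2 ℓ j ≤
            ρ * ((∑ ℓ, f' ℓ * y ℓ) + ∑ ℓ, ∑ j, c' ℓ j * x ℓ j))
    (ystar : F → ℝ) (xstar : F → D → ℝ)
    (hfeas : FLFeas ystar xstar)
    (hopt : ∀ y x, FLFeas y x →
      (∑ ℓ, f ℓ * ystar ℓ) + ∑ ℓ, ∑ j, cm ℓ j * xstar ℓ j ≤
        (∑ ℓ, f ℓ * y ℓ) + ∑ ℓ, ∑ j, cm ℓ j * x ℓ j) :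
    ∃ lam : ((F → Bool) × (F → D → Bool)) → ℝ,
      (∀ q, 0 ≤ lam q) ∧
      (∀ q, ¬ FLFeas (boolY q.1) (boolX q.2) → lam q = 0) ∧
      (∑ q, lam q = 1) ∧
      (∀ ℓ, ∑ q, lam q * boolY q.1 ℓ = ystar ℓ) ∧
      (∑ q, lam q * (∑ ℓ, ∑ j, cm ℓ j * boolX q.2 ℓ j) ≤
        ρ * ∑ ℓ, ∑ j, cm ℓ j * xstar ℓ j) := by
  classical
  have hρ0 : (0:ℝ) < ρ := lt_of_lt_of_le one_pos hρ
  cases isEmpty_or_nonempty D with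
  | inl hD =>
    cases isEmpty_or_nonempty F with
    | inl hF =>
      refine ⟨fun _ => 1, fun _ => zero_le_one, ?_, ?_, ?_, ?_⟩
      · intro q hq; exact absurd ⟨fun j => hD.elim j, fun ℓ => hF.elim ℓ⟩ hq
      · rw [Finset.sum_const, Finset.card_univ, nsmul_eq_mul, mul_one]
        norm_cast
        rw [Fintype.card_eq_one_iff]
        exact ⟨default, fun q => Subsingleton.elim _ _⟩
      · exact fun ℓ => hF.elim ℓ
      · simp
    | inr hF =>
      exfalso
      obtain ⟨q, hqf, hq⟩ := hLMP (fun _ => 1) (fun _ _ => 0) (fun _ => zero_le_one)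
        (fun _ _ => le_rfl) (fun _ _ _ _ => by norm_num)
      set S := ∑ ℓ, boolY q.1 ℓ with hS
      have hcard : (0:ℝ) < (Fintype.card F : ℝ) := by exact_mod_cast Fintype.card_pos
      have hfeas' : FLFeas (fun _ : F => (S - 1)/(Fintype.card F)) (fun (_ : F) (_ : D) => (0:ℝ)) :=
        ⟨fun j => hD.elim j, fun ℓ j => hD.elim j⟩
      have h2 := hq _ _ hfeas'
      simp only [one_mul, zero_mul, Finset.sum_const_zero, add_zero, Finset.sum_const,
        Finset.card_univ, nsmul_eq_mul] at h2
      rw [mul_div_cancel₀ _ (ne_of_gt hcard)] at h2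
      nlinarith [h2]
  | inr hD =>
  cases isEmpty_or_nonempty F with
  | inl hF =>
    exact absurd (hfeas.1 (Classical.arbitrary D)) (by simp)
  | inr hF =>
  have hy1 : ∀ ℓ, ystar ℓ ≤ 1 := fun ℓ => (hfeas.2 ℓ (Classical.arbitrary D)).2
  by_contra hcon
  set cstar : ℝ := ∑ ℓ, ∑ j, cm ℓ j * xstar ℓ j with hcstar
  set conn : ((F → Bool) × (F → D → Bool)) → ℝ :=
    fun q => ∑ ℓ, ∑ j, cm ℓ j * boolX q.2 ℓ j with hconn
  set P : ((F → Bool) × (F → D → Bool)) → Prop :=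
    fun q => FLFeas (boolY q.1) (boolX q.2) with hP
  let Q := {q : (F → Bool) × (F → D → Bool) // P q}
  let T : (Q → ℝ) →ₗ[ℝ] (F → ℝ) × ℝ :=
    { toFun := fun lam => (fun ℓ => ∑ q : Q, lam q * boolY q.1.1 ℓ, ∑ q : Q, lam q * conn q.1)
      map_add' := by
        intro a b
        simp [Prod.ext_iff, funext_iff, add_mul, Finset.sum_add_distrib]
      map_smul' := by
        intro c a
        simp [Prod.ext_iff, funext_iff, Finset.mul_sum, mul_assoc] }
  set K : Set ((F → ℝ) × ℝ) := T '' stdSimplex ℝ Q with hK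
  set L : Set ((F → ℝ) × ℝ) := {p | p.1 = ystar ∧ p.2 ≤ ρ * cstar} with hL
  have hKcpt : IsCompact K := (isCompact_stdSimplex ℝ Q).image T.continuous_of_finiteDimensional
  have hKconv : Convex ℝ K := (convex_stdSimplex ℝ Q).linear_image T
  have hLconv : Convex ℝ L := by
    rintro p ⟨hp1, hp2⟩ r ⟨hr1, hr2⟩ a b ha hb hab
    constructor
    · show a • p.1 + b • r.1 = ystar
      rw [hp1, hr1, ← add_smul, hab, one_smul]
    · show a * p.2 + b * r.2 ≤ ρ * cstar
      calc a * p.2 + b * r.2 ≤ a * (ρ * cstar) + b * (ρ * cstar) :=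
            add_le_add (mul_le_mul_of_nonneg_left hp2 ha) (mul_le_mul_of_nonneg_left hr2 hb)
        _ = ρ * cstar := by rw [← add_mul, hab, one_mul]
  have hLclosed : IsClosed L := by
    have h : L = (Prod.fst ⁻¹' {ystar}) ∩ (Prod.snd ⁻¹' Set.Iic (ρ * cstar)) := rfl
    rw [h]
    exact (isClosed_singleton.preimage continuous_fst).inter
      (isClosed_Iic.preimage continuous_snd)
  have hdisj : Disjoint K L := by
    rw [Set.disjoint_left]
    rintro p ⟨lam, hlam, rfl⟩ ⟨h1, h2⟩
    apply hcon
    have hsum : ∀ g : ((F → Bool) × (F → D → Bool)) → ℝ,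
        ∑ q, (if h : P q then lam ⟨q, h⟩ else 0) * g q = ∑ q : Q, lam q * g q.1 := by
      intro g
      rw [← Finset.sum_filter_add_sum_filter_not Finset.univ P
        (fun q => (if h : P q then lam ⟨q, h⟩ else 0) * g q)]
      have e1 : ∑ q ∈ Finset.univ.filter P, (if h : P q then lam ⟨q, h⟩ else 0) * g q
          = ∑ q : Q, lam q * g q.1 := by
        rw [Finset.sum_subtype (p := P) (Finset.univ.filter P) (fun q => by simp)
          (fun q => (if h : P q then lam ⟨q, h⟩ else 0) * g q)]
        exact Finset.sum_congr rfl fun q _ => by rw [dif_pos q.2]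
      have e2 : ∑ q ∈ Finset.univ.filter (fun q => ¬ P q),
          (if h : P q then lam ⟨q, h⟩ else 0) * g q = 0 := by
        refine Finset.sum_eq_zero fun q hq => ?_
        rw [dif_neg (Finset.mem_filter.mp hq).2, zero_mul]
      rw [e1, e2, add_zero]
    refine ⟨fun q => if h : P q then lam ⟨q, h⟩ else 0, ?_, ?_, ?_, ?_, ?_⟩
    · intro q; by_cases h : P q
      · simp only [dif_pos h]; exact hlam.1 _
      · simp only [dif_neg h]; exact le_rfl
    · intro q h; exact dif_neg h
    · have := hsum (fun _ => 1)
      simp only [mul_one] at this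
      rw [this, hlam.2]
    · intro ℓ
      rw [hsum (fun q => boolY q.1 ℓ)]
      exact congrFun h1 ℓ
    · rw [hsum conn]
      exact h2
  obtain ⟨φ, u, v, hKu, huv, hvL⟩ :=
    geometric_hahn_banach_compact_closed hKconv hKcpt hLconv hLclosed hdisj
  set α' : F → ℝ := fun ℓ => φ ((Pi.single ℓ 1 : F → ℝ), (0:ℝ)) with hα'
  set β' : ℝ := φ ((0 : F → ℝ), (1:ℝ)) with hβ'
  have hφ : ∀ (y : F → ℝ) (t : ℝ), φ (y, t) = (∑ ℓ, α' ℓ * y ℓ) + t * β' := by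
    intro y t
    have h1 : ((y, t) : (F → ℝ) × ℝ)
        = (∑ ℓ, y ℓ • (((Pi.single ℓ 1 : F → ℝ), (0:ℝ)) : (F → ℝ) × ℝ))
          + t • (((0 : F → ℝ), (1:ℝ)) : (F → ℝ) × ℝ) := by
      refine Prod.ext ?_ ?_
      · show y = (∑ ℓ, y ℓ • (((Pi.single ℓ 1 : F → ℝ), (0:ℝ)) : (F → ℝ) × ℝ)).1 + t • 0
        funext j
        simp [Prod.fst_sum, Finset.sum_apply, Pi.single_apply, smul_eq_mul, mul_ite,
          Finset.sum_ite_eq]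
      · show t = (∑ ℓ, y ℓ • (((Pi.single ℓ 1 : F → ℝ), (0:ℝ)) : (F → ℝ) × ℝ)).2 + t • 1
        simp [Prod.snd_sum]
    rw [h1, map_add, map_sum, map_smul]
    simp only [smul_eq_mul]
    congr 1
    exact Finset.sum_congr rfl fun ℓ _ => by rw [map_smul, smul_eq_mul]; exact mul_comm _ _
  have hβ'le : β' ≤ 0 := by
    by_contra hβpos
    push_neg at hβpos
    have hv0 : v < φ (ystar, ρ * cstar) := hvL (ystar, ρ * cstar) ⟨rfl, le_rfl⟩
    have hkey : ∀ t : ℝ, t ≤ ρ * cstar → v < (∑ ℓ, α' ℓ * ystar ℓ) + t * β' := by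
      intro t ht
      have h := hvL (ystar, t) ⟨rfl, ht⟩
      rwa [hφ] at h
    set A := ∑ ℓ, α' ℓ * ystar ℓ with hA
    have h1 := hkey (ρ * cstar) le_rfl
    have hle : (v - A) / β' ≤ ρ * cstar :=
      le_of_lt ((div_lt_iff₀ hβpos).mpr (by nlinarith))
    have h2 := hkey ((v - A) / β') hle
    rw [div_mul_cancel₀ _ (ne_of_gt hβpos)] at h2
    linarith
  set α : F → ℝ := fun ℓ => - α' ℓ with hα
  set β : ℝ := - β' with hβ
  have hβ0 : 0 ≤ β := by rw [hβ]; linarith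
  have hsep : ∀ q : (F → Bool) × (F → D → Bool), P q →
      (∑ ℓ, α ℓ * ystar ℓ) + β * (ρ * cstar) < (∑ ℓ, α ℓ * boolY q.1 ℓ) + β * conn q := by
    intro q hq
    have hmem : ((boolY q.1, conn q) : (F → ℝ) × ℝ) ∈ K := by
      refine ⟨fun q' => if q' = ⟨q, hq⟩ then 1 else 0, ⟨fun q' => by positivity, ?_⟩, ?_⟩
      · simp
        rw [Finset.sum_eq_single_of_mem ⟨q, hq⟩ (Finset.mem_univ _)]
        · simp
        · intro b _ hb; rw [if_neg hb]
      · refine Prod.ext ?_ ?_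
        · funext ℓ
          show ∑ q' : Q, (if q' = ⟨q, hq⟩ then (1:ℝ) else 0) * boolY q'.1.1 ℓ = boolY q.1 ℓ
          simp [ite_mul, Finset.sum_ite_eq']
          rw [Finset.sum_eq_single_of_mem ⟨q, hq⟩ (Finset.mem_univ _)]
          · simp
          · intro b _ hb; rw [if_neg hb]
        · show ∑ q' : Q, (if q' = ⟨q, hq⟩ then (1:ℝ) else 0) * conn q'.1 = conn q
          simp [ite_mul, Finset.sum_ite_eq']
          rw [Finset.sum_eq_single_of_mem ⟨q, hq⟩ (Finset.mem_univ _)]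
          · simp
          · intro b _ hb; rw [if_neg hb]
    have h1 := hKu _ hmem
    have h2 : v < φ (ystar, ρ * cstar) := hvL (ystar, ρ * cstar) ⟨rfl, le_rfl⟩
    rw [hφ] at h1 h2
    have e1 : ∑ ℓ, α ℓ * ystar ℓ = - ∑ ℓ, α' ℓ * ystar ℓ := by
      rw [← Finset.sum_neg_distrib]; exact Finset.sum_congr rfl fun ℓ _ => by rw [hα]; ring
    have e2 : ∑ ℓ, α ℓ * boolY q.1 ℓ = - ∑ ℓ, α' ℓ * boolY q.1 ℓ := by
      rw [← Finset.sum_neg_distrib]; exact Finset.sum_congr rfl fun ℓ _ => by rw [hα]; ring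
    rw [e1, e2, hβ]
    nlinarith [h1, h2, huv]
  -- Apply the LMP algorithm with facility costs α⁺/ρ and connection costs β·cm.
  obtain ⟨q₀, hq₀feas, hq₀⟩ := hLMP (fun ℓ => max (α ℓ) 0 / ρ) (fun ℓ j => β * cm ℓ j)
    (fun ℓ => div_nonneg (le_max_right _ _) (le_of_lt hρ0))
    (fun ℓ j => mul_nonneg hβ0 (hcm ℓ j))
    (fun ℓ ℓ' j j' => by
      nlinarith [mul_le_mul_of_nonneg_left (hmetric ℓ ℓ' j j') hβ0])
  have hbound := hq₀ ystar xstar hfeas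
  have eL1 : ρ * (∑ ℓ, (max (α ℓ) 0 / ρ) * boolY q₀.1 ℓ) = ∑ ℓ, max (α ℓ) 0 * boolY q₀.1 ℓ := by
    rw [Finset.mul_sum]
    exact Finset.sum_congr rfl fun ℓ _ => by field_simp
  have eL2 : ∑ ℓ, ∑ j, (β * cm ℓ j) * boolX q₀.2 ℓ j = β * conn q₀ := by
    rw [hconn, Finset.mul_sum]
    exact Finset.sum_congr rfl fun ℓ _ => by
      rw [Finset.mul_sum]; exact Finset.sum_congr rfl fun j _ => by ring
  have eR1 : ρ * (∑ ℓ, (max (α ℓ) 0 / ρ) * ystar ℓ) = ∑ ℓ, max (α ℓ) 0 * ystar ℓ := by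
    rw [Finset.mul_sum]
    exact Finset.sum_congr rfl fun ℓ _ => by field_simp
  have eR2 : ∑ ℓ, ∑ j, (β * cm ℓ j) * xstar ℓ j = β * cstar := by
    rw [hcstar, Finset.mul_sum]
    exact Finset.sum_congr rfl fun ℓ _ => by
      rw [Finset.mul_sum]; exact Finset.sum_congr rfl fun j _ => by ring
  rw [mul_add, eR2] at hbound
  rw [eL2, eR1] at hbound
  rw [eL1] at hbound
  -- hbound : ∑ max α 0 * boolY q₀ + β * conn q₀ ≤ ∑ max α 0 * ystar + ρ * (β * cstar)
  set q₁ : (F → Bool) × (F → D → Bool) :=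
    (fun ℓ => q₀.1 ℓ || decide (α ℓ < 0), q₀.2) with hq₁
  have hq₁feas : P q₁ := by
    refine ⟨hq₀feas.1, fun ℓ j => ⟨⟨(hq₀feas.2 ℓ j).1.1, ?_⟩, ?_⟩⟩
    · refine le_trans (hq₀feas.2 ℓ j).1.2 ?_
      simp only [boolY, hq₁]
      by_cases h : q₀.1 ℓ <;> simp [h] <;> split <;> norm_num
    · simp only [boolY]
      split <;> norm_num
  have hconn₁ : conn q₁ = conn q₀ := rfl
  have hsep₁ := hsep q₁ hq₁feas
  rw [hconn₁] at hsep₁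
  have epoint : ∀ ℓ, α ℓ * boolY q₁.1 ℓ
      = max (α ℓ) 0 * boolY q₀.1 ℓ + (if α ℓ < 0 then α ℓ else 0) := by
    intro ℓ
    by_cases h : α ℓ < 0
    · have h1 : boolY q₁.1 ℓ = 1 := by simp [boolY, hq₁, h]
      have h2 : max (α ℓ) 0 = 0 := max_eq_right h.le
      rw [h1, h2, if_pos h]; ring
    · have h1 : boolY q₁.1 ℓ = boolY q₀.1 ℓ := by simp [boolY, hq₁, h]
      have h2 : max (α ℓ) 0 = α ℓ := max_eq_left (not_lt.mp h)
      rw [h1, h2, if_neg h]; ring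
  have esum : ∑ ℓ, α ℓ * boolY q₁.1 ℓ
      = ∑ ℓ, max (α ℓ) 0 * boolY q₀.1 ℓ + ∑ ℓ, (if α ℓ < 0 then α ℓ else 0) := by
    rw [← Finset.sum_add_distrib]
    exact Finset.sum_congr rfl fun ℓ _ => epoint ℓ
  rw [esum] at hsep₁
  have hfinal : ∑ ℓ, (max (α ℓ) 0 * ystar ℓ + (if α ℓ < 0 then α ℓ else 0) - α ℓ * ystar ℓ) ≤ 0 := by
    refine Finset.sum_nonpos fun ℓ _ => ?_
    by_cases h : α ℓ < 0
    · rw [max_eq_right h.le, if_pos h]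
      nlinarith [hy1 ℓ, h]
    · rw [max_eq_left (not_lt.mp h), if_neg h]; ring_nf; exact le_rfl
  rw [Finset.sum_sub_distrib, Finset.sum_add_distrib] at hfinal
  have hcomm : β * (ρ * cstar) = ρ * (β * cstar) := by ring
  linarith [hsep₁, hbound, hfinal, hcomm]
end

section
/- Let S = {v ∈ S_1} ⊆ N(u) be an independent set of in-neighbors of u and suppose a feasible neighbor-threshold vertex cover mechanism M has approximation ratio ρ on graph G. Define for each w ∈ S the quantity x_w = inf{σ ≥ 0 : t_u(c_w = β, c_{−w} = 0) ≥ 1 for all β ≥ σ}, where t_u is u's threshold function. Then 0 < x_w < ∞ for each w, and Σ_{w∈S} x_w ≤ ρ. -/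
open Finset

/-- For a feasible neighbor-threshold vertex-cover mechanism with approximation ratio `ρ`
and an independent set `S ⊆ N(u)`: each quantity
`x_w = inf {σ ≥ 0 : t_u(c_w = β, c_{-w} = 0) ≥ 1 for all β ≥ σ}` is positive and
well-defined (the set is nonempty, i.e. `x_w < ∞`), and `∑_{w ∈ S} x_w ≤ ρ`. -/
theorem stmt18 {V : Type*} [Fintype V] [DecidableEq V]
    (G : SimpleGraph V) [DecidableRel G.Adj]
    (t : V → (V → ℝ) → ℝ)
    (hdep : ∀ w (c c' : V → ℝ), (∀ v ∈ G.neighborFinset w, c v = c' v) → t w c = t w c')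
    (hfeas : ∀ c : V → ℝ, (∀ v, 0 ≤ c v) → ∀ a b, G.Adj a b →
      c a ≤ t a c ∨ c b ≤ t b c)
    (ρ : ℝ) (hρ : 1 ≤ ρ)
    (happrox : ∀ c : V → ℝ, (∀ v, 0 ≤ c v) → ∀ T : Finset V,
      (∀ a b, G.Adj a b → a ∈ T ∨ b ∈ T) →
      ∑ v ∈ Finset.univ.filter (fun v => c v ≤ t v c), c v ≤ ρ * ∑ v ∈ T, c v)
    (u : V) (S : Finset V) (hS : S ⊆ G.neighborFinset u)
    (hindep : ∀ a ∈ S, ∀ b ∈ S, ¬ G.Adj a b) :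
    (∀ w ∈ S,
      {σ : ℝ | 0 ≤ σ ∧ ∀ β, σ ≤ β →
          1 ≤ t u (fun z => if z = w then β else 0)}.Nonempty ∧
      0 < sInf {σ : ℝ | 0 ≤ σ ∧ ∀ β, σ ≤ β →
          1 ≤ t u (fun z => if z = w then β else 0)}) ∧
    ∑ w ∈ S, sInf {σ : ℝ | 0 ≤ σ ∧ ∀ β, σ ≤ β →
        1 ≤ t u (fun z => if z = w then β else 0)} ≤ ρ := by
  classical
  have hρ0 : (0:ℝ) < ρ := lt_of_lt_of_le one_pos hρ
  set A : V → Set ℝ := fun w => {σ : ℝ | 0 ≤ σ ∧ ∀ β, σ ≤ β →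
      1 ≤ t u (fun z => if z = w then β else 0)} with hAdef
  have hbdd : ∀ w, BddBelow (A w) := fun w => ⟨0, fun σ hσ => hσ.1⟩
  have huw : ∀ w ∈ S, G.Adj u w := fun w hw => (G.mem_neighborFinset u w).1 (hS hw)
  have hwu : ∀ w ∈ S, w ≠ u := fun w hw h => G.irrefl (h ▸ huw w hw)
  have huS : u ∉ S := fun h => G.irrefl (huw u h)
  -- indicator of u with value 1
  set e : V → ℝ := fun v => if v = u then 1 else 0 with hedef
  -- Key fact F1: if t_u(β·𝟙_w) < 1 with β ≥ 0, then β ≤ ρ and β ≤ t w e.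
  have F1 : ∀ w ∈ S, ∀ β : ℝ, 0 ≤ β → t u (fun z => if z = w then β else 0) < 1 →
      β ≤ ρ ∧ β ≤ t w e := by
    intro w hw β hβ ht
    set c : V → ℝ := fun v => if v = u then 1 else if v = w then β else 0 with hcdef
    have hcnn : ∀ v, 0 ≤ c v := by
      intro v; simp only [hcdef]; split_ifs <;> simp [hβ]
    have htu : t u c = t u (fun z => if z = w then β else 0) := by
      apply hdep
      intro v hv
      have hvu : v ≠ u := fun h => (G.notMem_neighborFinset_self u) (h ▸ hv)
      simp [hcdef, hvu]
    have hcu : c u = 1 := by simp [hcdef]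
    have hnu : ¬ (c u ≤ t u c) := by
      rw [hcu, htu]; exact not_le.mpr ht
    have hwsel : c w ≤ t w c := by
      rcases hfeas c hcnn u w (huw w hw) with h | h
      · exact absurd h hnu
      · exact h
    have hcw : c w = β := by simp [hcdef, hwu w hw]
    have htw : t w c = t w e := by
      apply hdep
      intro v hv
      have hvw : v ≠ w := fun h => (G.notMem_neighborFinset_self w) (h ▸ hv)
      simp only [hcdef, hedef]
      split_ifs with h1 h2 <;> simp_all
    constructor
    · -- β ≤ ρ via approximation with cover univ.erase w
      have hcover : ∀ a b, G.Adj a b → a ∈ Finset.univ.erase w ∨ b ∈ Finset.univ.erase w := by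
        intro a b hab
        by_cases ha : a = w
        · right
          refine Finset.mem_erase.mpr ⟨?_, Finset.mem_univ _⟩
          intro h; subst ha; subst h; exact G.irrefl hab
        · left; exact Finset.mem_erase.mpr ⟨ha, Finset.mem_univ _⟩
      have happ := happrox c hcnn (Finset.univ.erase w) hcover
      have hsumT : ∑ v ∈ Finset.univ.erase w, c v = 1 := by
        rw [Finset.sum_eq_single_of_mem u
          (Finset.mem_erase.mpr ⟨Ne.symm (hwu w hw), Finset.mem_univ _⟩)]
        · exact hcu
        · intro v hv hvu
          have hvw : v ≠ w := (Finset.mem_erase.mp hv).1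
          simp [hcdef, hvu, hvw]
      have hmem : w ∈ Finset.univ.filter (fun v => c v ≤ t v c) := by
        simp only [Finset.mem_filter, Finset.mem_univ, true_and]; exact hwsel
      have hsingle : c w ≤ ∑ v ∈ Finset.univ.filter (fun v => c v ≤ t v c), c v :=
        Finset.single_le_sum (fun v _ => hcnn v) hmem
      rw [hcw] at hsingle
      rw [hsumT, mul_one] at happ
      linarith
    · rw [hcw, htw] at hwsel; exact hwsel
  -- Nonemptiness: ρ + 1 ∈ A w
  have hne : ∀ w ∈ S, (A w).Nonempty := by
    intro w hw
    refine ⟨ρ + 1, ⟨by linarith, ?_⟩⟩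
    intro β hβ
    by_contra h
    push_neg at h
    have := (F1 w hw β (by linarith) h).1
    linarith
  -- Positivity: sInf (A w) ≥ 1/(2ρ)
  have hpos : ∀ w ∈ S, 1 / (2 * ρ) ≤ sInf (A w) := by
    intro w hw
    apply le_csInf (hne w hw)
    intro σ hσ
    by_contra hlt
    push_neg at hlt
    -- then t_u((1/2ρ)·𝟙_w) ≥ 1
    have hβ0 : (0:ℝ) < 1 / (2 * ρ) := by positivity
    have ht1 : 1 ≤ t u (fun z => if z = w then 1 / (2 * ρ) else 0) :=
      hσ.2 _ (le_of_lt hlt)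
    -- construct the contradiction
    set c : V → ℝ := fun v => if v = u then 1 else if v = w then 1 / (2 * ρ) else 0 with hcdef
    have hcnn : ∀ v, 0 ≤ c v := by
      intro v; simp only [hcdef]; split_ifs
      · exact zero_le_one
      · exact le_of_lt hβ0
      · exact le_rfl
    have htu : t u c = t u (fun z => if z = w then 1 / (2 * ρ) else 0) := by
      apply hdep
      intro v hv
      have hvu : v ≠ u := fun h => (G.notMem_neighborFinset_self u) (h ▸ hv)
      simp [hcdef, hvu]
    have husel : c u ≤ t u c := by
      have : c u = 1 := by simp [hcdef]
      rw [this, htu]; exact ht1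
    have hcover : ∀ a b, G.Adj a b → a ∈ Finset.univ.erase u ∨ b ∈ Finset.univ.erase u := by
      intro a b hab
      by_cases ha : a = u
      · right
        refine Finset.mem_erase.mpr ⟨?_, Finset.mem_univ _⟩
        intro h; subst ha; subst h; exact G.irrefl hab
      · left; exact Finset.mem_erase.mpr ⟨ha, Finset.mem_univ _⟩
    have happ := happrox c hcnn (Finset.univ.erase u) hcover
    have hsumT : ∑ v ∈ Finset.univ.erase u, c v = 1 / (2 * ρ) := by
      rw [Finset.sum_eq_single_of_mem w
        (Finset.mem_erase.mpr ⟨hwu w hw, Finset.mem_univ _⟩)]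
      · simp [hcdef, hwu w hw]
      · intro v hv hvw
        have hvu : v ≠ u := (Finset.mem_erase.mp hv).1
        simp [hcdef, hvu, hvw]
    have hmem : u ∈ Finset.univ.filter (fun v => c v ≤ t v c) := by
      simp only [Finset.mem_filter, Finset.mem_univ, true_and]; exact husel
    have hsingle : c u ≤ ∑ v ∈ Finset.univ.filter (fun v => c v ≤ t v c), c v :=
      Finset.single_le_sum (fun v _ => hcnn v) hmem
    have hcu : c u = 1 := by simp [hcdef]
    rw [hcu] at hsingle
    rw [hsumT] at happ
    have : ρ * (1 / (2 * ρ)) = 1 / 2 := by field_simp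
    rw [this] at happ
    linarith
  have hposS : ∀ w ∈ S, 0 < sInf (A w) := by
    intro w hw
    have : (0:ℝ) < 1 / (2 * ρ) := by positivity
    linarith [hpos w hw]
  -- F3 : sInf (A w) ≤ t w e
  have F3 : ∀ w ∈ S, sInf (A w) ≤ t w e := by
    intro w hw
    by_contra h
    push_neg at h
    set y : ℝ := max ((t w e + sInf (A w)) / 2) 0 with hydef
    have hy0 : 0 ≤ y := le_max_right _ _
    have hylt : y < sInf (A w) := by
      apply max_lt
      · linarith
      · exact hposS w hw
    have hynmem : y ∉ A w := notMem_of_lt_csInf hylt (hbdd w)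
    have : ∃ β, y ≤ β ∧ t u (fun z => if z = w then β else 0) < 1 := by
      by_contra hc
      push_neg at hc
      exact hynmem ⟨hy0, fun β hβ => hc β hβ⟩
    obtain ⟨β, hβy, hβt⟩ := this
    have hβte := (F1 w hw β (le_trans hy0 hβy) hβt).2
    have hyt : t w e < y := lt_of_lt_of_le (by linarith) (le_max_left _ _)
    linarith
  refine ⟨fun w hw => ⟨hne w hw, hposS w hw⟩, ?_⟩
  -- the sum bound
  apply le_of_forall_pos_le_add
  intro ε hε
  set δ : ℝ := min (ε / (S.card + 1)) (1 / (4 * ρ)) with hδdef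
  have hcard : (0:ℝ) < S.card + 1 := by positivity
  have hδ0 : 0 < δ := lt_min (by positivity) (by positivity)
  have hδρ : δ < 1 / (2 * ρ) := by
    have h1 : δ ≤ 1 / (4 * ρ) := min_le_right _ _
    have h2 : 1 / (4 * ρ) < 1 / (2 * ρ) := by
      apply div_lt_div_of_pos_left one_pos (by positivity)
      linarith
    linarith
  set c : V → ℝ := fun v => if v = u then 1 else if v ∈ S then sInf (A v) - δ else 0 with hcdef
  have hcnn : ∀ v, 0 ≤ c v := by
    intro v
    simp only [hcdef]
    split_ifs with h1 h2
    · norm_num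
    · have := hpos v h2; linarith
    · exact le_rfl
  have hSsel : ∀ w ∈ S, c w ≤ t w c := by
    intro w hw
    have htwc : t w c = t w e := by
      apply hdep
      intro v hv
      have hvw : G.Adj w v := (G.mem_neighborFinset w v).1 hv
      have hvS : v ∉ S := fun hvS' => hindep w hw v hvS' hvw
      simp only [hcdef, hedef]
      by_cases hvu : v = u <;> simp [hvu, hvS]
    have hcw : c w = sInf (A w) - δ := by simp [hcdef, hwu w hw, hw]
    rw [hcw, htwc]
    have := F3 w hw
    linarith
  have hcover : ∀ a b, G.Adj a b → a ∈ Finset.univ \ S ∨ b ∈ Finset.univ \ S := by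
    intro a b hab
    by_cases ha : a ∈ S
    · right
      refine Finset.mem_sdiff.mpr ⟨Finset.mem_univ _, fun hb => hindep a ha b hb hab⟩
    · left; exact Finset.mem_sdiff.mpr ⟨Finset.mem_univ _, ha⟩
  have happ := happrox c hcnn (Finset.univ \ S) hcover
  have hsumT : ∑ v ∈ Finset.univ \ S, c v = 1 := by
    rw [Finset.sum_eq_single_of_mem u (Finset.mem_sdiff.mpr ⟨Finset.mem_univ _, huS⟩)]
    · simp [hcdef]
    · intro v hv hvu
      have hvS : v ∉ S := (Finset.mem_sdiff.mp hv).2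
      simp [hcdef, hvu, hvS]
  have hsub : S ⊆ Finset.univ.filter (fun v => c v ≤ t v c) := by
    intro w hw
    simp only [Finset.mem_filter, Finset.mem_univ, true_and]
    exact hSsel w hw
  have hsumS : ∑ w ∈ S, c w ≤ ∑ v ∈ Finset.univ.filter (fun v => c v ≤ t v c), c v :=
    Finset.sum_le_sum_of_subset_of_nonneg hsub (fun v _ _ => hcnn v)
  have hSval : ∑ w ∈ S, c w = ∑ w ∈ S, (sInf (A w) - δ) := by
    apply Finset.sum_congr rfl
    intro w hw
    simp [hcdef, hwu w hw, hw]
  rw [hsumT, mul_one] at happ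
  have hfinal : ∑ w ∈ S, sInf (A w) ≤ ρ + S.card * δ := by
    have : ∑ w ∈ S, (sInf (A w) - δ) = (∑ w ∈ S, sInf (A w)) - S.card * δ := by
      rw [Finset.sum_sub_distrib]
      simp [mul_comm]
    rw [hSval, this] at hsumS
    linarith
  have hcardδ : (S.card : ℝ) * δ ≤ ε := by
    have h1 : δ ≤ ε / (S.card + 1) := min_le_left _ _
    have h2 : (S.card : ℝ) * δ ≤ (S.card : ℝ) * (ε / (S.card + 1)) :=
      mul_le_mul_of_nonneg_left h1 (Nat.cast_nonneg _)
    have h3 : (S.card : ℝ) * (ε / (S.card + 1)) ≤ ε := by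
      rw [mul_div_assoc']
      rw [div_le_iff₀ hcard]
      nlinarith [Nat.cast_nonneg (α := ℝ) S.card]
    linarith
  show ∑ w ∈ S, sInf (A w) ≤ ρ + ε
  linarith
end
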